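/- Let I ⊆ ℝ be an interval, γ = (γ₁,γ₂) : I → ℝ² a C² curve parameterized by arc-length (γ₁'(s)² + γ₂'(s)² = 1 for all s), and h₀ : I → ℝ a C¹ function. Define θ(s,r) = (x(s,r), y(s,r), t(s,r)) = (γ₁(s)+rγ₂'(s), γ₂(s)−rγ₁'(s), h₀(s) − (r/2)·γ(s)·γ'(s)), and set p = y_s t_r − y_r t_s − (y/2)(x_s y_r − x_r y_s), q = x_r t_s − x_s t_r + (x/2)(x_s y_r − x_r y_s), ω = x_s y_r − x_r y_s (subscripts denoting partial derivatives, everything evaluated at (s,r)). Then, with κ(s) = γ''(s)·γ'(s)^⊥ the signed curvature and (v₁,v₂)^⊥ = (v₂,−v₁): p = γ₁'(s)·A(s,r), q = γ₂'(s)·A(s,r), ω = −(1 − r·κ(s)), where A(s,r) = h₀'(s) − r + (r²/2)κ(s) + (1/2)γ'(s)·γ(s)^⊥; consequently the angle function satisfies √(p² + q²) = |h₀'(s) − r + (r²/2)κ(s) + (1/2)γ'(s)·γ(s)^⊥|. -/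

import Mathlib

/-- `x(s,r) = γ₁(s) + rγ₂'(s)`. -/
noncomputable def xF (γ₁ γ₂ : ℝ → ℝ) (s r : ℝ) : ℝ := γ₁ s + r * deriv γ₂ s

/-- `y(s,r) = γ₂(s) − rγ₁'(s)`. -/
noncomputable def yF (γ₁ γ₂ : ℝ → ℝ) (s r : ℝ) : ℝ := γ₂ s - r * deriv γ₁ s

/-- `t(s,r) = h₀(s) − (r/2)·γ(s)·γ'(s)`. -/
noncomputable def tF (γ₁ γ₂ h₀ : ℝ → ℝ) (s r : ℝ) : ℝ :=
  h₀ s - r / 2 * (γ₁ s * deriv γ₁ s + γ₂ s * deriv γ₂ s)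

/-- `ω = x_s y_r − x_r y_s`. -/
noncomputable def omF (γ₁ γ₂ : ℝ → ℝ) (s r : ℝ) : ℝ :=
  deriv (fun s' => xF γ₁ γ₂ s' r) s * deriv (fun r' => yF γ₁ γ₂ s r') r
    - deriv (fun r' => xF γ₁ γ₂ s r') r * deriv (fun s' => yF γ₁ γ₂ s' r) s

/-- `p = y_s t_r − y_r t_s − (y/2)(x_s y_r − x_r y_s)`. -/
noncomputable def pF (γ₁ γ₂ h₀ : ℝ → ℝ) (s r : ℝ) : ℝ :=
  deriv (fun s' => yF γ₁ γ₂ s' r) s * deriv (fun r' => tF γ₁ γ₂ h₀ s r') r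
    - deriv (fun r' => yF γ₁ γ₂ s r') r * deriv (fun s' => tF γ₁ γ₂ h₀ s' r) s
    - yF γ₁ γ₂ s r / 2 * omF γ₁ γ₂ s r

/-- `q = x_r t_s − x_s t_r + (x/2)(x_s y_r − x_r y_s)`. -/
noncomputable def qF (γ₁ γ₂ h₀ : ℝ → ℝ) (s r : ℝ) : ℝ :=
  deriv (fun r' => xF γ₁ γ₂ s r') r * deriv (fun s' => tF γ₁ γ₂ h₀ s' r) s
    - deriv (fun s' => xF γ₁ γ₂ s' r) s * deriv (fun r' => tF γ₁ γ₂ h₀ s r') r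
    + xF γ₁ γ₂ s r / 2 * omF γ₁ γ₂ s r

/-- The signed curvature `κ = γ''·γ'^⊥ = γ₁''γ₂' − γ₂''γ₁'`. -/
noncomputable def kappaF (γ₁ γ₂ : ℝ → ℝ) (s : ℝ) : ℝ :=
  deriv (deriv γ₁) s * deriv γ₂ s - deriv (deriv γ₂) s * deriv γ₁ s

/-- `A(s,r) = h₀'(s) − r + (r²/2)κ(s) + (1/2)γ'(s)·γ(s)^⊥`, with `γ'·γ^⊥ = γ₁'γ₂ − γ₂'γ₁`. -/
noncomputable def AF (γ₁ γ₂ h₀ : ℝ → ℝ) (s r : ℝ) : ℝ :=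
  deriv h₀ s - r + r ^ 2 / 2 * kappaF γ₁ γ₂ s
    + 1 / 2 * (deriv γ₁ s * γ₂ s - deriv γ₂ s * γ₁ s)

/-- for the seed-curve parameterization of an H-minimal patch, with `γ`
parameterized by arc-length, one has `p = γ₁'·A`, `q = γ₂'·A`, `ω = −(1 − rκ)`, and the angle
function satisfies `√(p²+q²) = |A|`, where
`A = h₀'(s) − r + (r²/2)κ(s) + (1/2)γ'(s)·γ(s)^⊥`. -/
theorem stmt15 (I : Set ℝ) (hIo : IsOpen I) (hIc : I.OrdConnected)
    (γ₁ γ₂ h₀ : ℝ → ℝ)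
    (hγ₁ : ContDiffOn ℝ 2 γ₁ I) (hγ₂ : ContDiffOn ℝ 2 γ₂ I)
    (hh₀ : ContDiffOn ℝ 1 h₀ I)
    (harc : ∀ s ∈ I, deriv γ₁ s ^ 2 + deriv γ₂ s ^ 2 = 1) :
    ∀ s ∈ I, ∀ r : ℝ,
      pF γ₁ γ₂ h₀ s r = deriv γ₁ s * AF γ₁ γ₂ h₀ s r ∧
      qF γ₁ γ₂ h₀ s r = deriv γ₂ s * AF γ₁ γ₂ h₀ s r ∧
      omF γ₁ γ₂ s r = -(1 - r * kappaF γ₁ γ₂ s) ∧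
      Real.sqrt (pF γ₁ γ₂ h₀ s r ^ 2 + qF γ₁ γ₂ h₀ s r ^ 2) = |AF γ₁ γ₂ h₀ s r| := by
  intro s hs r
  have hmem := hIo.mem_nhds hs
  have h21 : (1 : WithTop ℕ∞) + 1 ≤ 2 := by norm_num
  have hd1 : DifferentiableAt ℝ γ₁ s :=
    ((hγ₁.differentiableOn (by norm_num)).differentiableAt hmem)
  have hd2 : DifferentiableAt ℝ γ₂ s :=
    ((hγ₂.differentiableOn (by norm_num)).differentiableAt hmem)
  have hd1' : DifferentiableAt ℝ (deriv γ₁) s :=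
    (((hγ₁.deriv_of_isOpen hIo h21).differentiableOn (by norm_num)).differentiableAt hmem)
  have hd2' : DifferentiableAt ℝ (deriv γ₂) s :=
    (((hγ₂.deriv_of_isOpen hIo h21).differentiableOn (by norm_num)).differentiableAt hmem)
  have hdh : DifferentiableAt ℝ h₀ s :=
    ((hh₀.differentiableOn (by norm_num)).differentiableAt hmem)
  set c1 := deriv γ₁ s; set c2 := deriv γ₂ s
  set d1 := deriv (deriv γ₁) s; set d2 := deriv (deriv γ₂) s
  set g1 := γ₁ s; set g2 := γ₂ s
  -- s-derivatives
  have hxs : deriv (fun s' => xF γ₁ γ₂ s' r) s = c1 + r * d2 :=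
    (hd1.hasDerivAt.add (hd2'.hasDerivAt.const_mul r)).deriv
  have hys : deriv (fun s' => yF γ₁ γ₂ s' r) s = c2 - r * d1 :=
    (hd2.hasDerivAt.sub (hd1'.hasDerivAt.const_mul r)).deriv
  have hts : deriv (fun s' => tF γ₁ γ₂ h₀ s' r) s
      = deriv h₀ s - r / 2 * ((c1 * c1 + g1 * d1) + (c2 * c2 + g2 * d2)) :=
    (hdh.hasDerivAt.sub (((hd1.hasDerivAt.mul hd1'.hasDerivAt).add
      (hd2.hasDerivAt.mul hd2'.hasDerivAt)).const_mul (r / 2))).deriv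
  -- r-derivatives
  have hxr : deriv (fun r' => xF γ₁ γ₂ s r') r = c2 :=
    (((hasDerivAt_id r).mul_const c2).const_add g1).deriv.trans (by simp)
  have hyr : deriv (fun r' => yF γ₁ γ₂ s r') r = -c1 := by
    have : HasDerivAt (fun r' => yF γ₁ γ₂ s r') (0 - 1 * c1) r :=
      (hasDerivAt_const r g2).sub ((hasDerivAt_id r).mul_const c1)
    simpa using this.deriv
  have htr : deriv (fun r' => tF γ₁ γ₂ h₀ s r') r = -(1 / 2 * (g1 * c1 + g2 * c2)) := by
    have : HasDerivAt (fun r' => tF γ₁ γ₂ h₀ s r')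
        (0 - (1 / 2) * (g1 * c1 + g2 * c2)) r :=
      (hasDerivAt_const r (h₀ s)).sub
        (((hasDerivAt_id r).div_const 2).mul_const (g1 * c1 + g2 * c2))
    simpa using this.deriv
  have harcs := harc s hs
  have hom : omF γ₁ γ₂ s r = -(1 - r * kappaF γ₁ γ₂ s) := by
    rw [omF, hxs, hxr, hys, hyr, kappaF]
    linear_combination (-1 : ℝ) * harcs
  have hp : pF γ₁ γ₂ h₀ s r = c1 * AF γ₁ γ₂ h₀ s r := by
    rw [pF, omF, hxs, hxr, hys, hyr, hts, htr, AF, kappaF, yF]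
    linear_combination (-r * c1) * harcs
  have hq : qF γ₁ γ₂ h₀ s r = c2 * AF γ₁ γ₂ h₀ s r := by
    rw [qF, omF, hxs, hxr, hys, hyr, hts, htr, AF, kappaF, xF]
    linear_combination (-r * c2) * harcs
  refine ⟨hp, hq, hom, ?_⟩
  have hsq : pF γ₁ γ₂ h₀ s r ^ 2 + qF γ₁ γ₂ h₀ s r ^ 2 = AF γ₁ γ₂ h₀ s r ^ 2 := by
    rw [hp, hq]; linear_combination (AF γ₁ γ₂ h₀ s r ^ 2) * harcs
  rw [hsq, Real.sqrt_sq_eq_abs]
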